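/- Let d, κ, β₊, β₋, L₁, L₂ ∈ (0,∞), let Γ = (L₁𝕋)×(L₂𝕋) and Ω = Γ×(−d,0), with Σ₊ = Γ×{0} and Σ₋ = Γ×{−d}. Then for every continuously differentiable function φ : Γ×[−d,0] → ℝ, min{κπ²/(4d²), β₊β₋/κ} · ∫_Ω |φ|² dx ≤ κ∫_Ω |∂₃φ|² dx + β₊∫_{Σ₊}|φ|² + β₋∫_{Σ₋}|φ|² ≤ κ∫_Ω |∇φ|² dx + β₊∫_{Σ₊}|φ|² + β₋∫_{Σ₋}|φ|². -/

import Mathlib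

open MeasureTheory Real Set

noncomputable section

/-- Partial derivative of `f : ℝ³ → ℝ` in the `i`-th coordinate direction. -/
def pd (i : Fin 3) (f : (Fin 3 → ℝ) → ℝ) (x : Fin 3 → ℝ) : ℝ :=
  fderiv ℝ f x (Pi.single i 1)

/-- Fundamental domain `(0,L₁)×(0,L₂)×(−d,0)` of the periodic slab `Ω = Γ×(−d,0)`. -/
def slab (L₁ L₂ d : ℝ) : Set (Fin 3 → ℝ) :=
  Set.univ.pi ![Ioo 0 L₁, Ioo 0 L₂, Ioo (-d) 0]

/-- Fundamental domain of the horizontal cross-section `Γ = (L₁𝕋)×(L₂𝕋)`. -/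
def rect (L₁ L₂ : ℝ) : Set (ℝ × ℝ) := Ioo 0 L₁ ×ˢ Ioo 0 L₂

set_option maxHeartbeats 1000000


noncomputable section

lemma one_div_cos_sq {x : ℝ} (hx : Real.cos x ≠ 0) :
    1 / Real.cos x ^ 2 = Real.tan x ^ 2 + 1 := by
  rw [Real.tan_eq_sin_div_cos]
  field_simp
  exact (Real.sin_sq_add_cos_sq x).symm

lemma tan_mono {x y : ℝ} (hx : -(π/2) < x) (hy : y < π/2) (hxy : x ≤ y) :
    Real.tan x ≤ Real.tan y := by
  rcases eq_or_lt_of_le hxy with rfl | h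
  · exact le_refl _
  · exact (Real.tan_lt_tan_of_lt_of_lt_pi_div_two hx hy h).le

/-- 1D coercivity: core lemma. -/
lemma oneD_core (d κ βp βm : ℝ) (hd : 0 < d) (hκ : 0 < κ) (hβp : 0 < βp) (hβm : 0 < βm)
    (f : ℝ → ℝ) (hf : ContDiff ℝ 1 f) :
    min (κ * π ^ 2 / (4 * d ^ 2)) (βp * βm / κ) * (∫ z in Ioo (-d) 0, f z ^ 2)
      ≤ κ * (∫ z in Ioo (-d) 0, (deriv f z) ^ 2) + βp * f 0 ^ 2 + βm * f (-d) ^ 2 := by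
  set m : ℝ := min (κ * π ^ 2 / (4 * d ^ 2)) (βp * βm / κ) with hm
  have hπ := Real.pi_pos
  have hm0 : 0 < m := lt_min (by positivity) (by positivity)
  set a : ℝ := Real.sqrt (m / κ) with haa
  have ha0 : 0 < a := Real.sqrt_pos.2 (by positivity)
  have ha2 : a ^ 2 = m / κ := Real.sq_sqrt (by positivity)
  have hma : κ * a ^ 2 = m := by rw [ha2]; field_simp
  have had : a * d ≤ π / 2 := by
    have h1 : a ^ 2 ≤ (π / (2 * d)) ^ 2 := by
      rw [ha2, div_pow, div_le_div_iff₀ hκ (by positivity)]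
      have h0 : m ≤ κ * π ^ 2 / (4 * d ^ 2) := min_le_left _ _
      have h0' : m * (4 * d ^ 2) ≤ κ * π ^ 2 :=
        (le_div_iff₀ (by positivity : (0:ℝ) < 4 * d ^ 2)).1 h0
      nlinarith
    have h2 : a ≤ π / (2 * d) := by
      have := Real.sqrt_le_sqrt h1
      rwa [Real.sqrt_sq ha0.le, Real.sqrt_sq (by positivity)] at this
    calc a * d ≤ (π / (2 * d)) * d := by nlinarith
      _ = π / 2 := by field_simp
  -- the shift s
  set s : ℝ := min (a * d) (Real.arctan (βp / (κ * a))) with hs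
  have hs0 : 0 < s := lt_min (by positivity) (by simpa using Real.arctan_strictMono (show (0:ℝ) < βp / (κ * a) by positivity))
  have hs2 : s < π / 2 := lt_of_le_of_lt (min_le_right _ _) (Real.arctan_lt_pi_div_two _)
  have hsd : s ≤ a * d := min_le_left _ _
  have htop : κ * a * Real.tan s ≤ βp := by
    have h1 : Real.tan s ≤ βp / (κ * a) := by
      have := tan_mono (x := s) (y := Real.arctan (βp / (κ * a)))
        (by linarith) (Real.arctan_lt_pi_div_two _) (min_le_right _ _)
      rwa [Real.tan_arctan] at this
    calc κ * a * Real.tan s ≤ κ * a * (βp / (κ * a)) := by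
          apply mul_le_mul_of_nonneg_left h1 (by positivity)
      _ = βp := by field_simp
  have hbot : κ * a * Real.tan (a * d - s) ≤ βm := by
    rcases le_or_gt (a * d) (Real.arctan (βp / (κ * a))) with h | h
    · have hsad : s = a * d := min_eq_left h
      rw [hsad, sub_self, Real.tan_zero, mul_zero]
      exact hβm.le
    · have hsar : s = Real.arctan (βp / (κ * a)) := min_eq_right h.le
      have hts : Real.tan s = βp / (κ * a) := by rw [hsar, Real.tan_arctan]
      have h1 : Real.tan (a * d - s) ≤ Real.tan (π / 2 - s) := by
        apply tan_mono (by linarith) (by linarith) (by linarith)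
      rw [Real.tan_pi_div_two_sub, hts] at h1
      have h2 : κ * a * Real.tan (a * d - s) ≤ κ * a * (βp / (κ * a))⁻¹ := by
        apply mul_le_mul_of_nonneg_left h1 (by positivity)
      have h3 : κ * a * (βp / (κ * a))⁻¹ = κ * (κ * a ^ 2) / βp := by
        field_simp
      rw [h3, hma] at h2
      have h4 : κ * m / βp ≤ βm := by
        rw [div_le_iff₀ hβp]
        have h5 : m ≤ βp * βm / κ := min_le_right _ _
        have h6 : m * κ ≤ βp * βm := (le_div_iff₀ hκ).1 h5
        nlinarith
      linarith
  -- comparison function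
  set t : ℝ → ℝ := fun z => Real.tan (a * z + s) with ht
  set h : ℝ → ℝ := fun z => -(κ * a) * t z with hh
  set g : ℝ → ℝ := fun z => -(κ * a ^ 2) * ((t z) ^ 2 + 1) with hg
  have hcos : ∀ z ∈ Icc (-d) 0, Real.cos (a * z + s) ≠ 0 := by
    intro z hz
    have hz1 : a * (-d) ≤ a * z := mul_le_mul_of_nonneg_left hz.1 ha0.le
    have hz2 : a * z ≤ a * 0 := mul_le_mul_of_nonneg_left hz.2 ha0.le
    have h1 : -(π / 2) < a * z + s := by nlinarith
    have h2 : a * z + s < π / 2 := by nlinarith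
    exact (Real.cos_pos_of_mem_Ioo ⟨h1, h2⟩).ne'
  have hlin : ∀ z : ℝ, HasDerivAt (fun z : ℝ => a * z + s) a z := by
    intro z
    simpa using ((hasDerivAt_id z).const_mul a).add_const s
  have htder : ∀ z ∈ Icc (-d) 0, HasDerivAt t (a * ((t z) ^ 2 + 1)) z := by
    intro z hz
    have := (Real.hasDerivAt_tan (hcos z hz)).comp z (hlin z)
    rw [one_div_cos_sq (hcos z hz)] at this
    simpa [ht, mul_comm, Function.comp_def] using this
  have htcont : ContinuousOn t (Icc (-d) 0) := by
    intro z hz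
    exact ((htder z hz).continuousAt).continuousWithinAt
  have hfc : Continuous f := hf.continuous
  have hfd : ∀ z : ℝ, HasDerivAt f (deriv f z) z := fun z =>
    (hf.differentiable one_ne_zero z).hasDerivAt
  have hfdc : Continuous (deriv f) := hf.continuous_deriv le_rfl
  -- derivative of G
  set G : ℝ → ℝ := fun z => h z * (f z) ^ 2 with hG
  set G' : ℝ → ℝ := fun z => g z * (f z) ^ 2 + h z * (2 * f z * deriv f z) with hG'
  have hGder : ∀ z ∈ uIcc (-d) 0, HasDerivAt G (G' z) z := by
    intro z hz
    rw [uIcc_of_le (by linarith : (-d : ℝ) ≤ 0)] at hz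
    have h1 : HasDerivAt h (g z) z := by
      have := (htder z hz).const_mul (-(κ * a))
      convert this using 1
      show -(κ * a ^ 2) * ((t z) ^ 2 + 1) = -(κ * a) * (a * ((t z) ^ 2 + 1))
      ring
      all_goals rfl
    have h2 : HasDerivAt (fun z => (f z) ^ 2) (2 * f z * deriv f z) z := by
      simpa [mul_comm, mul_assoc] using ((hfd z).fun_pow 2)
    exact h1.mul h2
  have hG'int : IntervalIntegrable G' volume (-d) 0 := by
    apply ContinuousOn.intervalIntegrable
    rw [uIcc_of_le (by linarith : (-d : ℝ) ≤ 0)]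
    apply ContinuousOn.add
    · exact ((continuousOn_const.mul ((htcont.pow 2).add continuousOn_const)).mul
        ((hfc.continuousOn).pow 2))
    · exact (continuousOn_const.mul htcont).mul
        ((continuousOn_const.mul (hfc.continuousOn)).mul (hfdc.continuousOn))
  have hFTC : ∫ z in (-d)..0, G' z = G 0 - G (-d) :=
    intervalIntegral.integral_eq_sub_of_hasDerivAt hGder hG'int
  -- pointwise identity
  have hpt : ∀ z : ℝ, κ * (deriv f z) ^ 2 - m * (f z) ^ 2 - G' z
      = κ * (deriv f z + a * t z * f z) ^ 2 := by
    intro z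
    simp only [hG', hg, hh]
    linear_combination (f z) ^ 2 * hma
  -- integrability of pieces
  have hint1 : IntervalIntegrable (fun z => κ * (deriv f z) ^ 2) volume (-d) 0 :=
    (continuous_const.mul (hfdc.pow 2)).intervalIntegrable _ _
  have hint2 : IntervalIntegrable (fun z => m * (f z) ^ 2) volume (-d) 0 :=
    (continuous_const.mul (hfc.pow 2)).intervalIntegrable _ _
  have hkey : 0 ≤ κ * (∫ z in (-d)..0, (deriv f z) ^ 2) - m * (∫ z in (-d)..0, (f z) ^ 2)
      - (G 0 - G (-d)) := by
    have hnn : 0 ≤ ∫ z in (-d)..0, (κ * (deriv f z) ^ 2 - m * (f z) ^ 2 - G' z) := by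
      apply intervalIntegral.integral_nonneg (by linarith : (-d : ℝ) ≤ 0)
      intro z _
      rw [hpt z]
      positivity
    have heq : ∫ z in (-d)..0, (κ * (deriv f z) ^ 2 - m * (f z) ^ 2 - G' z)
        = κ * (∫ z in (-d)..0, (deriv f z) ^ 2) - m * (∫ z in (-d)..0, (f z) ^ 2)
          - ∫ z in (-d)..0, G' z := by
      rw [intervalIntegral.integral_sub (hint1.sub hint2) hG'int,
        intervalIntegral.integral_sub hint1 hint2,
        intervalIntegral.integral_const_mul, intervalIntegral.integral_const_mul]
    rw [heq, hFTC] at hnn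
    linarith
  -- boundary values
  have hG0 : G 0 = -(κ * a * Real.tan s) * (f 0) ^ 2 := by
    simp only [hG, hh, ht]
    norm_num
  have hGd : G (-d) = (κ * a * Real.tan (a * d - s)) * (f (-d)) ^ 2 := by
    simp only [hG, hh, ht]
    have : a * -d + s = -(a * d - s) := by ring
    rw [this, Real.tan_neg]
    ring
  -- convert Ioo integrals to interval integrals
  have hIoo : ∀ F : ℝ → ℝ, ∫ z in Ioo (-d) 0, F z = ∫ z in (-d)..0, F z := by
    intro F
    rw [intervalIntegral.integral_of_le (by linarith : (-d : ℝ) ≤ 0),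
      MeasureTheory.integral_Ioc_eq_integral_Ioo]
  rw [hIoo, hIoo]
  nlinarith [sq_nonneg (f 0), sq_nonneg (f (-d)), hkey, htop, hbot,
    mul_le_mul_of_nonneg_right htop (sq_nonneg (f 0)),
    mul_le_mul_of_nonneg_right hbot (sq_nonneg (f (-d)))]

def E3 : ((ℝ × ℝ) × ℝ) ≃ᵐ (Fin 3 → ℝ) :=
  (MeasurableEquiv.prodComm : ((ℝ × ℝ) × ℝ) ≃ᵐ (ℝ × (ℝ × ℝ))).trans <|
    ((MeasurableEquiv.refl ℝ).prodCongr (MeasurableEquiv.finTwoArrow).symm).trans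
      (MeasurableEquiv.piFinSuccAbove (fun _ : Fin 3 => ℝ) 2).symm

lemma E3_eq_insertNth (q : (ℝ × ℝ) × ℝ) :
    E3 q = Fin.insertNth 2 q.2 ![q.1.1, q.1.2] := by
  simp [E3, MeasurableEquiv.prodComm, MeasurableEquiv.prodCongr,
    MeasurableEquiv.finTwoArrow, MeasurableEquiv.piFinSuccAbove,
    Fin.insertNthEquiv]

lemma E3_apply (q : (ℝ × ℝ) × ℝ) : E3 q = ![q.1.1, q.1.2, q.2] := by
  rw [E3_eq_insertNth]
  funext i
  fin_cases i <;> rfl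

lemma E3_mp : MeasurePreserving E3 volume volume := by
  have h1 : MeasurePreserving
      (MeasurableEquiv.prodComm : ((ℝ × ℝ) × ℝ) ≃ᵐ (ℝ × (ℝ × ℝ))) volume volume := by
    rw [show ((volume : Measure ((ℝ × ℝ) × ℝ))) = (volume : Measure (ℝ × ℝ)).prod volume from
      Measure.volume_eq_prod .., show ((volume : Measure (ℝ × (ℝ × ℝ)))) =
      (volume : Measure ℝ).prod volume from Measure.volume_eq_prod ..]
    exact Measure.measurePreserving_swap
  have h2 : MeasurePreserving
      ((MeasurableEquiv.refl ℝ).prodCongr (MeasurableEquiv.finTwoArrow (α := ℝ)).symm)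
      volume volume := by
    rw [show ((volume : Measure (ℝ × (ℝ × ℝ)))) = (volume : Measure ℝ).prod volume from
      Measure.volume_eq_prod .., show ((volume : Measure (ℝ × (Fin 2 → ℝ)))) =
      (volume : Measure ℝ).prod volume from Measure.volume_eq_prod ..]
    exact (MeasurePreserving.id volume).prod (volume_preserving_finTwoArrow ℝ).symm
  have h3 : MeasurePreserving (MeasurableEquiv.piFinSuccAbove (fun _ : Fin 3 => ℝ) 2).symm
      volume volume := (volume_preserving_piFinSuccAbove (fun _ : Fin 3 => ℝ) 2).symm
  exact (h3.comp h2).comp h1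

lemma E3_preimage_slab {L₁ L₂ d : ℝ} :
    E3 ⁻¹' slab L₁ L₂ d = (rect L₁ L₂) ×ˢ Ioo (-d) 0 := by
  ext q
  simp only [mem_preimage, E3_apply, slab, rect, Set.mem_pi, mem_univ, forall_true_left,
    Set.mem_prod, Fin.forall_fin_succ]
  simp [Fin.forall_fin_two]
  tauto

lemma slab_transport {L₁ L₂ d : ℝ} (F : (Fin 3 → ℝ) → ℝ)
    (hF : IntegrableOn F (slab L₁ L₂ d)) :
    (∫ x in slab L₁ L₂ d, F x)
      = ∫ p in rect L₁ L₂, ∫ z in Ioo (-d) 0, F ![p.1, p.2, z] := by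
  have h1 : (∫ x in slab L₁ L₂ d, F x)
      = ∫ q in E3 ⁻¹' slab L₁ L₂ d, F (E3 q) :=
    (E3_mp.setIntegral_preimage_emb E3.measurableEmbedding F _).symm
  have h2 : Integrable (fun q => F (E3 q)) (volume.restrict (E3 ⁻¹' slab L₁ L₂ d)) := by
    have := (E3_mp.restrict_preimage_emb E3.measurableEmbedding
      (slab L₁ L₂ d)).integrable_comp_emb E3.measurableEmbedding (g := F)
    exact this.2 hF
  rw [E3_preimage_slab] at h1 h2
  have hres : (volume : Measure ((ℝ × ℝ) × ℝ)).restrict ((rect L₁ L₂) ×ˢ Ioo (-d) 0)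
      = ((volume : Measure (ℝ × ℝ)).restrict (rect L₁ L₂)).prod
          ((volume : Measure ℝ).restrict (Ioo (-d) 0)) := by
    rw [Measure.volume_eq_prod, Measure.prod_restrict]
  rw [hres] at h1 h2
  rw [h1, MeasureTheory.integral_prod _ h2]
  simp only [E3_apply]

lemma slab_transport_integrable {L₁ L₂ d : ℝ} (F : (Fin 3 → ℝ) → ℝ)
    (hF : IntegrableOn F (slab L₁ L₂ d)) :
    Integrable (fun p : ℝ × ℝ => ∫ z in Ioo (-d) 0, F ![p.1, p.2, z])
      (volume.restrict (rect L₁ L₂)) := by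
  have h2 : Integrable (fun q => F (E3 q)) (volume.restrict (E3 ⁻¹' slab L₁ L₂ d)) := by
    have := (E3_mp.restrict_preimage_emb E3.measurableEmbedding
      (slab L₁ L₂ d)).integrable_comp_emb E3.measurableEmbedding (g := F)
    exact this.2 hF
  rw [E3_preimage_slab] at h2
  have hres : (volume : Measure ((ℝ × ℝ) × ℝ)).restrict ((rect L₁ L₂) ×ˢ Ioo (-d) 0)
      = ((volume : Measure (ℝ × ℝ)).restrict (rect L₁ L₂)).prod
          ((volume : Measure ℝ).restrict (Ioo (-d) 0)) := by
    rw [Measure.volume_eq_prod, Measure.prod_restrict]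
  rw [hres] at h2
  have := h2.integral_prod_left
  simpa [E3_apply] using this

lemma slab_integrableOn {L₁ L₂ d : ℝ} (F : (Fin 3 → ℝ) → ℝ) (hF : Continuous F) :
    IntegrableOn F (slab L₁ L₂ d) := by
  have hsub : slab L₁ L₂ d ⊆ Set.univ.pi ![Icc 0 L₁, Icc 0 L₂, Icc (-d) 0] := by
    apply Set.pi_mono
    intro i _
    fin_cases i <;> simp [Ioo_subset_Icc_self]
  have hK : IsCompact (Set.univ.pi ![Icc 0 L₁, Icc 0 L₂, Icc (-d) 0]) := by
    apply isCompact_univ_pi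
    intro i
    fin_cases i <;> simp [isCompact_Icc]
  exact ((hF.continuousOn).integrableOn_compact hK).mono_set hsub

lemma rect_integrableOn {L₁ L₂ : ℝ} (F : ℝ × ℝ → ℝ) (hF : Continuous F) :
    IntegrableOn F (rect L₁ L₂) := by
  have hsub : rect L₁ L₂ ⊆ Icc 0 L₁ ×ˢ Icc 0 L₂ :=
    Set.prod_mono Ioo_subset_Icc_self Ioo_subset_Icc_self
  exact ((hF.continuousOn).integrableOn_compact (isCompact_Icc.prod isCompact_Icc)).mono_set hsub

lemma embed_continuous (c : ℝ) :
    Continuous (fun p : ℝ × ℝ => (![p.1, p.2, c] : Fin 3 → ℝ)) := by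
  apply continuous_pi
  intro i
  fin_cases i
  · simpa using continuous_fst
  · simpa using continuous_snd
  · simpa using continuous_const (y := c)

lemma curve_contDiff (p : ℝ × ℝ) :
    ContDiff ℝ 1 (fun z : ℝ => (![p.1, p.2, z] : Fin 3 → ℝ)) := by
  apply contDiff_pi.2
  intro i
  fin_cases i
  · simpa using contDiff_const (c := p.1)
  · simpa using contDiff_const (c := p.2)
  · exact contDiff_id

lemma curve_hasDerivAt (p : ℝ × ℝ) (z : ℝ) :
    HasDerivAt (fun z : ℝ => (![p.1, p.2, z] : Fin 3 → ℝ)) (Pi.single 2 1) z := by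
  apply hasDerivAt_pi.2
  intro i
  fin_cases i
  · simpa [Pi.single] using hasDerivAt_const z p.1
  · simpa [Pi.single] using hasDerivAt_const z p.2
  · simpa [Pi.single] using hasDerivAt_id' (x := z)


/-- **Coercivity of the dissipation functional on a rigid periodic slab, case
`β₊, β₋ ∈ (0,∞)`.**  For every continuously differentiable horizontally periodic `φ`,
`min{κπ²/(4d²), β₊β₋/κ} ∫_Ω |φ|² ≤ 𝒱_β[φ] ≤ 𝒟_β[φ]`, where
`𝒱_β[φ] = κ∫_Ω |∂₃φ|² + β₊∫_{Σ₊}|φ|² + β₋∫_{Σ₋}|φ|²` is the vertical dissipation and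
`𝒟_β[φ] = κ∫_Ω |∇φ|² + β₊∫_{Σ₊}|φ|² + β₋∫_{Σ₋}|φ|²`. -/
theorem rigid_coercivity_periodic_slab
    (d κ βp βm L₁ L₂ : ℝ) (hd : 0 < d) (hκ : 0 < κ) (hβp : 0 < βp) (hβm : 0 < βm)
    (hL₁ : 0 < L₁) (hL₂ : 0 < L₂)
    (φ : (Fin 3 → ℝ) → ℝ) (hφ : ContDiff ℝ 1 φ)
    (hper1 : ∀ x, φ (x + Pi.single 0 L₁) = φ x)
    (hper2 : ∀ x, φ (x + Pi.single 1 L₂) = φ x) :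
    min (κ * π ^ 2 / (4 * d ^ 2)) (βp * βm / κ) * (∫ x in slab L₁ L₂ d, (φ x) ^ 2) ≤
      κ * (∫ x in slab L₁ L₂ d, (pd 2 φ x) ^ 2)
        + βp * (∫ p in rect L₁ L₂, (φ ![p.1, p.2, 0]) ^ 2)
        + βm * (∫ p in rect L₁ L₂, (φ ![p.1, p.2, -d]) ^ 2)
    ∧ κ * (∫ x in slab L₁ L₂ d, (pd 2 φ x) ^ 2)
        + βp * (∫ p in rect L₁ L₂, (φ ![p.1, p.2, 0]) ^ 2)
        + βm * (∫ p in rect L₁ L₂, (φ ![p.1, p.2, -d]) ^ 2)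
      ≤ κ * (∫ x in slab L₁ L₂ d, ∑ i, (pd i φ x) ^ 2)
        + βp * (∫ p in rect L₁ L₂, (φ ![p.1, p.2, 0]) ^ 2)
        + βm * (∫ p in rect L₁ L₂, (φ ![p.1, p.2, -d]) ^ 2) := by
  have hφc : Continuous φ := hφ.continuous
  have hpdc : ∀ i, Continuous (pd i φ) := by
    intro i
    exact (hφ.continuous_fderiv one_ne_zero).clm_apply continuous_const
  set m : ℝ := min (κ * π ^ 2 / (4 * d ^ 2)) (βp * βm / κ) with hm
  have hm0 : 0 < m := lt_min (by positivity) (by positivity)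
  -- integrability on the slab
  have hA : IntegrableOn (fun x => (φ x) ^ 2) (slab L₁ L₂ d) :=
    slab_integrableOn _ (hφc.pow 2)
  have hB : IntegrableOn (fun x => (pd 2 φ x) ^ 2) (slab L₁ L₂ d) :=
    slab_integrableOn _ ((hpdc 2).pow 2)
  have hS : IntegrableOn (fun x => ∑ i, (pd i φ x) ^ 2) (slab L₁ L₂ d) :=
    slab_integrableOn _ (by exact continuous_finset_sum _ fun i _ => (hpdc i).pow 2)
  -- second inequality
  have hmono2 : (∫ x in slab L₁ L₂ d, (pd 2 φ x) ^ 2)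
      ≤ ∫ x in slab L₁ L₂ d, ∑ i, (pd i φ x) ^ 2 := by
    apply MeasureTheory.integral_mono_of_nonneg
    · exact Filter.Eventually.of_forall fun x => sq_nonneg _
    · exact hS
    · apply Filter.Eventually.of_forall
      intro x
      exact Finset.single_le_sum (f := fun i => (pd i φ x) ^ 2)
        (fun i _ => sq_nonneg _) (Finset.mem_univ 2)
  refine ⟨?_, by nlinarith [mul_le_mul_of_nonneg_left hmono2 hκ.le]⟩
  -- first inequality
  -- per-fiber 1D estimate
  have hfiber : ∀ p : ℝ × ℝ,
      m * (∫ z in Ioo (-d) 0, (φ ![p.1, p.2, z]) ^ 2)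
        ≤ κ * (∫ z in Ioo (-d) 0, (pd 2 φ ![p.1, p.2, z]) ^ 2)
          + βp * (φ ![p.1, p.2, 0]) ^ 2 + βm * (φ ![p.1, p.2, -d]) ^ 2 := by
    intro p
    set f : ℝ → ℝ := fun z => φ ![p.1, p.2, z] with hf
    have hfc : ContDiff ℝ 1 f := hφ.comp (curve_contDiff p)
    have hfd : ∀ z, deriv f z = pd 2 φ ![p.1, p.2, z] := by
      intro z
      exact (((hφ.differentiable one_ne_zero) _).hasFDerivAt.comp_hasDerivAt z
        (curve_hasDerivAt p z)).deriv
    have := oneD_core d κ βp βm hd hκ hβp hβm f hfc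
    have heq : (∫ z in Ioo (-d) 0, (deriv f z) ^ 2)
        = ∫ z in Ioo (-d) 0, (pd 2 φ ![p.1, p.2, z]) ^ 2 := by
      congr 1
      funext z
      rw [hfd z]
    rw [heq] at this
    exact this
  -- transport to iterated integrals
  have hTA := slab_transport (L₁ := L₁) (L₂ := L₂) (d := d) _ hA
  have hTB := slab_transport (L₁ := L₁) (L₂ := L₂) (d := d) _ hB
  have hIA := slab_transport_integrable (L₁ := L₁) (L₂ := L₂) (d := d) _ hA
  have hIB := slab_transport_integrable (L₁ := L₁) (L₂ := L₂) (d := d) _ hB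
  have hIT : IntegrableOn (fun p : ℝ × ℝ => (φ ![p.1, p.2, 0]) ^ 2) (rect L₁ L₂) :=
    rect_integrableOn _ ((hφc.comp (embed_continuous 0)).pow 2)
  have hIBo : IntegrableOn (fun p : ℝ × ℝ => (φ ![p.1, p.2, -d]) ^ 2) (rect L₁ L₂) :=
    rect_integrableOn _ ((hφc.comp (embed_continuous (-d))).pow 2)
  rw [hTA, hTB]
  have hmain : (∫ p in rect L₁ L₂, m * (∫ z in Ioo (-d) 0, (φ ![p.1, p.2, z]) ^ 2))
      ≤ ∫ p in rect L₁ L₂,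
          (κ * (∫ z in Ioo (-d) 0, (pd 2 φ ![p.1, p.2, z]) ^ 2)
            + βp * (φ ![p.1, p.2, 0]) ^ 2 + βm * (φ ![p.1, p.2, -d]) ^ 2) := by
    apply MeasureTheory.integral_mono (hIA.const_mul m)
    · exact ((hIB.const_mul κ).add (hIT.const_mul βp)).add (hIBo.const_mul βm)
    · exact hfiber
  have hsplit : (∫ p in rect L₁ L₂,
        (κ * (∫ z in Ioo (-d) 0, (pd 2 φ ![p.1, p.2, z]) ^ 2)
          + βp * (φ ![p.1, p.2, 0]) ^ 2 + βm * (φ ![p.1, p.2, -d]) ^ 2))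
      = κ * (∫ p in rect L₁ L₂, ∫ z in Ioo (-d) 0, (pd 2 φ ![p.1, p.2, z]) ^ 2)
        + βp * (∫ p in rect L₁ L₂, (φ ![p.1, p.2, 0]) ^ 2)
        + βm * (∫ p in rect L₁ L₂, (φ ![p.1, p.2, -d]) ^ 2) := by
    have h1 : (∫ p in rect L₁ L₂,
          (κ * (∫ z in Ioo (-d) 0, (pd 2 φ ![p.1, p.2, z]) ^ 2)
            + βp * (φ ![p.1, p.2, 0]) ^ 2 + βm * (φ ![p.1, p.2, -d]) ^ 2))
        = (∫ p in rect L₁ L₂,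
            (κ * (∫ z in Ioo (-d) 0, (pd 2 φ ![p.1, p.2, z]) ^ 2)
              + βp * (φ ![p.1, p.2, 0]) ^ 2))
          + ∫ p in rect L₁ L₂, βm * (φ ![p.1, p.2, -d]) ^ 2 :=
      MeasureTheory.integral_add ((hIB.const_mul κ).add (hIT.const_mul βp)) (hIBo.const_mul βm)
    have h2 : (∫ p in rect L₁ L₂,
          (κ * (∫ z in Ioo (-d) 0, (pd 2 φ ![p.1, p.2, z]) ^ 2)
            + βp * (φ ![p.1, p.2, 0]) ^ 2))
        = (∫ p in rect L₁ L₂, κ * (∫ z in Ioo (-d) 0, (pd 2 φ ![p.1, p.2, z]) ^ 2))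
          + ∫ p in rect L₁ L₂, βp * (φ ![p.1, p.2, 0]) ^ 2 :=
      MeasureTheory.integral_add (hIB.const_mul κ) (hIT.const_mul βp)
    rw [h1, h2, MeasureTheory.integral_const_mul, MeasureTheory.integral_const_mul,
      MeasureTheory.integral_const_mul]
  rw [MeasureTheory.integral_const_mul, hsplit] at hmain
  exact hmain
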